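/- Let q ≠ 0, λ = q - q^{-1}, and let ρ_j (invertible), A_j, B_j satisfy A_jB_j - B_jA_j = λ^{-1}(ρ_j - ρ_j^{-1}) together with ρ_jA_j = q²A_jρ_j and ρ_jB_j = q^{-2}B_jρ_j. Then the operators E_j▷f = A_jf - ρ_jfρ_j^{-1}A_j and F_j▷f = B_jfρ_j - q²fρ_jB_j on the algebra satisfy (E_j∘F_j - F_j∘E_j)(f) = λ^{-1}(ρ_jfρ_j^{-1} - ρ_j^{-1}fρ_j) for all f. -/

import Mathlib

/-- With A_jB_j - B_jA_j = λ⁻¹(ρ_j - ρ_j⁻¹), ρ_jA_j = q²A_jρ_j,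
ρ_jB_j = q⁻²B_jρ_j, the maps E_j▷f = A_jf - ρ_jfρ_j⁻¹A_j and
F_j▷f = B_jfρ_j - q²fρ_jB_j satisfy
(E_jF_j - F_jE_j)(f) = λ⁻¹(ρ_jfρ_j⁻¹ - ρ_j⁻¹fρ_j). -/
theorem stmt15 {L : Type*} [Ring L] [Algebra ℂ L]
    (q : ℂ) (hq : q ≠ 0) (hq2 : q ^ 2 ≠ 1)
    (lam : ℂ) (hlam : lam = q - q⁻¹)
    (ρ ρi A B : L) (hρinv : ρ * ρi = 1) (hρinv' : ρi * ρ = 1)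
    (hρA : ρ * A = q ^ 2 • (A * ρ)) (hρB : ρ * B = q⁻¹ ^ 2 • (B * ρ))
    (hABBA : A * B - B * A = lam⁻¹ • (ρ - ρi))
    (E F : L → L)
    (hE : ∀ f, E f = A * f - ρ * f * ρi * A)
    (hF : ∀ f, F f = B * f * ρ - q ^ 2 • (f * ρ * B)) :
    ∀ f : L, E (F f) - F (E f) = lam⁻¹ • (ρ * f * ρi - ρi * f * ρ) := by
  intro f
  have hlam0 : lam ≠ 0 := by
    rw [hlam, sub_ne_zero]
    intro h
    apply hq2
    have := congrArg (· * q) h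
    simpa [sq, inv_mul_cancel₀ hq] using this
  have hiq : q⁻¹ ^ 2 * q ^ 2 = 1 := by field_simp
  have hqi : q ^ 2 * q⁻¹ ^ 2 = 1 := by field_simp
  have hAρ : A * ρ = q⁻¹ ^ 2 • (ρ * A) := by
    rw [hρA, smul_smul, hiq, one_smul]
  have hBρ : B * ρ = q ^ 2 • (ρ * B) := by
    rw [hρB, smul_smul, hqi, one_smul]
  have hρiA : ρi * A = q⁻¹ ^ 2 • (A * ρi) := by
    calc ρi * A = ρi * (A * ρ) * ρi := by
          rw [← mul_assoc, mul_assoc (ρi * A), hρinv, mul_one]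
      _ = q⁻¹ ^ 2 • (A * ρi) := by
          rw [hAρ, mul_smul_comm, smul_mul_assoc, ← mul_assoc, hρinv', one_mul]
  have hρiB : ρi * B = q ^ 2 • (B * ρi) := by
    calc ρi * B = ρi * (B * ρ) * ρi := by
          rw [← mul_assoc, mul_assoc (ρi * B), hρinv, mul_one]
      _ = q ^ 2 • (B * ρi) := by
          rw [hBρ, mul_smul_comm, smul_mul_assoc, ← mul_assoc, hρinv', one_mul]
  have hAB : A * B = B * A + lam⁻¹ • ρ - lam⁻¹ • ρi := by
    have := hABBA
    rw [smul_sub] at this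
    linear_combination (norm := noncomm_ring) this
  -- ∀ x versions for simp pushing ρ, ρi rightwards
  have hρAx : ∀ x : L, ρ * (A * x) = q ^ 2 • (A * (ρ * x)) := fun x => by
    rw [← mul_assoc, hρA, smul_mul_assoc, mul_assoc]
  have hρBx : ∀ x : L, ρ * (B * x) = q⁻¹ ^ 2 • (B * (ρ * x)) := fun x => by
    rw [← mul_assoc, hρB, smul_mul_assoc, mul_assoc]
  have hρiAx : ∀ x : L, ρi * (A * x) = q⁻¹ ^ 2 • (A * (ρi * x)) := fun x => by
    rw [← mul_assoc, hρiA, smul_mul_assoc, mul_assoc]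
  have hρiBx : ∀ x : L, ρi * (B * x) = q ^ 2 • (B * (ρi * x)) := fun x => by
    rw [← mul_assoc, hρiB, smul_mul_assoc, mul_assoc]
  have hρρix : ∀ x : L, ρ * (ρi * x) = x := fun x => by
    rw [← mul_assoc, hρinv, one_mul]
  have hρiρx : ∀ x : L, ρi * (ρ * x) = x := fun x => by
    rw [← mul_assoc, hρinv', one_mul]
  have hABx : ∀ x : L, A * (B * x) = B * (A * x) + lam⁻¹ • (ρ * x) - lam⁻¹ • (ρi * x) := fun x => by
    rw [← mul_assoc, hAB]; noncomm_ring
  simp only [hE, hF]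
  simp only [mul_sub, sub_mul, mul_add, add_mul, mul_smul_comm, smul_mul_assoc,
    smul_sub, smul_add, smul_smul, mul_assoc,
    hABx, hAB, hρAx, hρA, hρBx, hρB, hρiAx, hρiA, hρiBx, hρiB, hρρix, hρinv,
    hρiρx, hρinv', mul_one, one_mul, hiq, hqi, one_smul]
  match_scalars <;> field_simp [hlam0] <;> ring
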